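/- If an assignment σ and prices p are almost at equilibrium with parameter ε ≥ 0, then the total benefit of σ is within nε of optimal: Σ_i a(i,σ(i)) ≥ max over permutations τ of Fin n of Σ_i a(i,τ(i)) − nε. -/

import Mathlib

/-- Person `i` is almost happy with object `j` under prices `p` and parameter `ε`. -/
def almostHappy (n : ℕ) (a : Fin n → Fin n → ℝ) (p : Fin n → ℝ) (ε : ℝ) (i j : Fin n) : Prop :=
  a i j - p j ≥ (⨆ j' : Fin n, (a i j' - p j')) - ε

/-- an assignment and prices almost at equilibrium with parameter `ε`
give total benefit within `n ε` of optimal. -/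
theorem almost_equilibrium_primal_near_optimal (n : ℕ) (hn : 1 ≤ n)
    (a : Fin n → Fin n → ℝ) (σ : Equiv.Perm (Fin n)) (p : Fin n → ℝ) (ε : ℝ) (hε : 0 ≤ ε)
    (heq : ∀ i, almostHappy n a p ε i (σ i)) :
    ∑ i, a i (σ i) ≥ (⨆ τ : Equiv.Perm (Fin n), ∑ i, a i (τ i)) - n * ε := by
  have hne : 0 < n := hn
  have key : ∀ τ : Equiv.Perm (Fin n), ∑ i, a i (τ i) ≤ ∑ i, a i (σ i) + n * ε := by
    intro τ
    have h1 : ∀ i : Fin n, a i (τ i) - p (τ i) ≤ ⨆ j' : Fin n, (a i j' - p j') := by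
      intro i
      exact le_ciSup (f := fun j' => a i j' - p j') (Set.Finite.bddAbove (Set.finite_range _)) (τ i)
    have h2 : ∀ i : Fin n, (⨆ j' : Fin n, (a i j' - p j')) - ε ≤ a i (σ i) - p (σ i) :=
      fun i => heq i
    calc ∑ i, a i (τ i)
        = ∑ i, (a i (τ i) - p (τ i)) + ∑ i, p (τ i) := by
          rw [← Finset.sum_add_distrib]; simp
      _ ≤ ∑ i, ((⨆ j' : Fin n, (a i j' - p j')) ) + ∑ i, p (τ i) := by
          exact add_le_add_left (Finset.sum_le_sum fun i _ => h1 i) _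
      _ = ∑ i, ((⨆ j' : Fin n, (a i j' - p j')) - ε) + ∑ i, p (σ i) + n * ε := by
          rw [Finset.sum_sub_distrib]
          rw [Equiv.sum_comp τ p, Equiv.sum_comp σ p]
          simp [Finset.card_univ]
          ring
      _ ≤ ∑ i, (a i (σ i) - p (σ i)) + ∑ i, p (σ i) + n * ε := by
          exact add_le_add_left (add_le_add_left (Finset.sum_le_sum fun i _ => h2 i) _) _
      _ = ∑ i, a i (σ i) + n * ε := by
          rw [Finset.sum_sub_distrib]; ring
  have : (⨆ τ : Equiv.Perm (Fin n), ∑ i, a i (τ i)) ≤ ∑ i, a i (σ i) + n * ε :=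
    ciSup_le key
  linarith
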